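/- Let $W$ be a Coxeter group, $x,y \in W$, and $u \in W$. Then $x \le \phi_u(y)$ in the Bruhat order if and only if $\psi_{u^{-1}}(x) \le y$ in the Bruhat order, where $\phi_u$ and $\psi_u$ denote the Demazure and anti-Demazure actions. -/

import Mathlib

namespace PaperStmt

open scoped Classical

variable {B : Type*} {W : Type*} [Group W] {M : CoxeterMatrix B}

/-- Bruhat (strong) cover: `v = t * u` for a reflection `t`, with `ℓ v = ℓ u + 1`. -/
def BruhatCov (cs : CoxeterSystem M W) (u v : W) : Prop :=
  cs.length v = cs.length u + 1 ∧ ∃ t : W, cs.IsReflection t ∧ v = t * u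

/-- The Bruhat (strong) order, generated by the covering relations. -/
def BruhatLe (cs : CoxeterSystem M W) : W → W → Prop :=
  Relation.ReflTransGen (BruhatCov cs)

/-- Strict Bruhat order. -/
def BruhatLt (cs : CoxeterSystem M W) (u v : W) : Prop :=
  BruhatLe cs u v ∧ u ≠ v

/-- Left weak order: `u ≤_L v` iff `ℓ(v u⁻¹) + ℓ u = ℓ v`. -/
def leftLe (cs : CoxeterSystem M W) (u v : W) : Prop :=
  cs.length (v * u⁻¹) + cs.length u = cs.length v

/-- Right weak order: `u ≤_R v` iff `ℓ u + ℓ(u⁻¹ v) = ℓ v`. -/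
def rightLe (cs : CoxeterSystem M W) (u v : W) : Prop :=
  cs.length u + cs.length (u⁻¹ * v) = cs.length v

/-- Demazure action of a simple reflection: `φ_s(x) = s x` if `s x > x`, else `x`. -/
noncomputable def phi (cs : CoxeterSystem M W) (i : B) (x : W) : W :=
  if BruhatLt cs x (cs.simple i * x) then cs.simple i * x else x

/-- Anti-Demazure action: `ψ_s(x) = s x` if `s x < x`, else `x`. -/
noncomputable def psi (cs : CoxeterSystem M W) (i : B) (x : W) : W :=
  if BruhatLt cs (cs.simple i * x) x then cs.simple i * x else x

/-- Right anti-Demazure action: `ψ^R_s(x) = x s` if `x s < x`, else `x`. -/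
noncomputable def psiR (cs : CoxeterSystem M W) (i : B) (x : W) : W :=
  if BruhatLt cs (x * cs.simple i) x then x * cs.simple i else x

/-- `φ_w` along a word `w = s_1 ⋯ s_n`: `φ_{s_1} ∘ ⋯ ∘ φ_{s_n}`. -/
noncomputable def phiWord (cs : CoxeterSystem M W) (ω : List B) (x : W) : W :=
  ω.foldr (phi cs) x

/-- `ψ_w` along a word `w = s_1 ⋯ s_n`: `ψ_{s_1} ∘ ⋯ ∘ ψ_{s_n}`. -/
noncomputable def psiWord (cs : CoxeterSystem M W) (ω : List B) (x : W) : W :=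
  ω.foldr (psi cs) x

/-- `ψ^R_w` along a word `w = s_1 ⋯ s_n`: `ψ^R_{s_n} ∘ ⋯ ∘ ψ^R_{s_1}`. -/
noncomputable def psiRWord (cs : CoxeterSystem M W) (ω : List B) (x : W) : W :=
  ω.foldl (fun y i => psiR cs i y) x

section Cocycle

variable (cs : CoxeterSystem M W)

/-- Count of `t` in a list, valued in `ZMod 2`. -/
noncomputable def cnt (t : W) (l : List W) : ZMod 2 :=
  (l.map fun r => if r = t then (1 : ZMod 2) else 0).sum

lemma cnt_nil (t : W) : cnt t [] = 0 := rfl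

lemma cnt_concat (t a : W) (l : List W) :
    cnt t (l ++ [a]) = cnt t l + if a = t then 1 else 0 := by
  simp [cnt]

lemma mem_of_cnt_ne_zero {t : W} {l : List W} (h : cnt t l ≠ 0) : t ∈ l := by
  induction l with
  | nil => exact absurd rfl h
  | cons a l ih =>
    by_cases hat : a = t
    · simp [hat]
    · simp only [cnt, List.map_cons, List.sum_cons, if_neg hat, zero_add] at h
      exact List.mem_cons_of_mem _ (ih h)

/-- The basic involution of `W × ZMod 2` attached to a simple reflection. -/
noncomputable def sigma (i : B) : Equiv.Perm (W × ZMod 2) :=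
  Function.Involutive.toPerm
    (fun p => (cs.simple i * p.1 * cs.simple i, p.2 + if p.1 = cs.simple i then 1 else 0))
    (by
      rintro ⟨t, ε⟩
      have hs := cs.simple_mul_simple_self i
      have key : (cs.simple i * t * cs.simple i = cs.simple i) ↔ t = cs.simple i := by
        constructor
        · intro h
          have h2 : cs.simple i * t * cs.simple i * cs.simple i
              = cs.simple i * cs.simple i := by rw [h]
          rw [cs.simple_mul_simple_cancel_right] at h2
          exact mul_left_cancel h2
        · rintro rfl; rw [hs, one_mul]
      have e1 : cs.simple i * (cs.simple i * t * cs.simple i) * cs.simple i = t := by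
        rw [mul_assoc (cs.simple i) t, cs.simple_mul_simple_cancel_left,
          cs.simple_mul_simple_cancel_right]
      by_cases h : t = cs.simple i
      · refine Prod.ext e1 ?_
        show ε + _ + _ = ε
        rw [if_pos h, if_pos (key.mpr h), add_assoc,
          show (1 : ZMod 2) + 1 = 0 by decide, add_zero]
      · refine Prod.ext e1 ?_
        show ε + _ + _ = ε
        rw [if_neg h, if_neg (fun hc => h (key.mp hc)), add_zero, add_zero])

lemma sigma_apply (i : B) (t : W) (ε : ZMod 2) :
    sigma cs i (t, ε) = (cs.simple i * t * cs.simple i, ε + if t = cs.simple i then 1 else 0) :=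
  rfl

end Cocycle

section SkewLemmas

/-- Iterating a skew-product permutation. -/
lemma perm_pow_apply {G : Type*} (F : Equiv.Perm (G × ZMod 2)) (φ : G → G) (χ : G → ZMod 2)
    (h : ∀ t ε, F (t, ε) = (φ t, ε + χ t)) :
    ∀ (k : ℕ) (t : G) (ε : ZMod 2),
      (F ^ k) (t, ε) = (φ^[k] t, ε + ∑ l ∈ Finset.range k, χ (φ^[l] t)) := by
  intro k
  induction k with
  | zero => intro t ε; simp
  | succ k ih =>
    intro t ε
    rw [pow_succ F k, Equiv.Perm.mul_apply, h t ε, ih (φ t) (ε + χ t)]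
    refine Prod.ext ?_ ?_
    · simp [Function.iterate_succ_apply]
    · simp only
      rw [Finset.sum_range_succ' (fun l => χ (φ^[l] t)) k]
      simp only [Function.iterate_succ_apply, Function.iterate_zero_apply]
      ring

lemma conj_eq_iff {G : Type*} [Group G] (g r t : G) :
    g * t * g⁻¹ = r ↔ t = g⁻¹ * r * g := by
  constructor
  · rintro rfl; group
  · rintro rfl; group

lemma conj_mul_dist {G : Type*} [Group G] (g x y : G) :
    g⁻¹ * (x * y) * g = (g⁻¹ * x * g) * (g⁻¹ * y * g) := by group

lemma sum_range_shift (f : ℕ → ZMod 2) (m : ℕ) (hper : ∀ l, f (l + m) = f l) (c : ℕ) :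
    ∑ l ∈ Finset.range m, f (l + c) = ∑ l ∈ Finset.range m, f l := by
  induction c with
  | zero => simp
  | succ c ih =>
    have h1 := Finset.sum_range_succ (fun l => f (l + c)) m
    have h2 := Finset.sum_range_succ' (fun l => f (l + c)) m
    have h3 : f (m + c) = f (0 + c) := by
      rw [Nat.zero_add, Nat.add_comm]; exact hper c
    rw [h3] at h1
    have h4 : ∑ l ∈ Finset.range m, f (l + 1 + c) = ∑ l ∈ Finset.range m, f (l + c) :=
      add_right_cancel (h2.symm.trans h1)
    calc ∑ l ∈ Finset.range m, f (l + (c + 1))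
        = ∑ l ∈ Finset.range m, f (l + 1 + c) :=
          Finset.sum_congr rfl fun l _ => by rw [show l + (c + 1) = l + 1 + c by omega]
      _ = ∑ l ∈ Finset.range m, f (l + c) := h4
      _ = ∑ l ∈ Finset.range m, f l := ih

lemma sum_range_two_mul_eq_zero (f : ℕ → ZMod 2) (q : ℕ) (h : ∀ l, f (l + q) = f l) :
    ∑ l ∈ Finset.range (q + q), f l = 0 := by
  have hA : ∑ i ∈ Finset.Ico q (q + q), f i = ∑ i ∈ Finset.range q, f i := by
    rw [Finset.sum_Ico_eq_sum_range]
    have e1 : q + q - q = q := by omega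
    rw [e1]
    exact Finset.sum_congr rfl fun i _ => by rw [Nat.add_comm]; exact h i
  rw [Finset.range_eq_Ico, ← Finset.sum_Ico_consecutive f (Nat.zero_le q) (by omega : q ≤ q + q),
    hA, ← Finset.range_eq_Ico]
  have h2 : ∀ x : ZMod 2, x + x = 0 := by decide
  exact h2 _

lemma invol_conj_eq_iff {G : Type*} [Group G] {c : G} (hc : c * c = 1) (t r : G) :
    c * t * c = r ↔ t = c * r * c := by
  constructor
  · rintro rfl
    simp only [← mul_assoc]
    rw [hc, one_mul, mul_assoc, hc, mul_one]
  · rintro rfl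
    simp only [← mul_assoc]
    rw [hc, one_mul, mul_assoc, hc, mul_one]

/-- The main braid-relation computation, over an abstract group. -/
lemma skew_braid_pow {G : Type*} [Group G] (a b : G) (ha : a * a = 1) (hb : b * b = 1)
    (m : ℕ) (hpm0 : (a * b) ^ m = 1)
    (F : Equiv.Perm (G × ZMod 2))
    (hF0 : ∀ (t : G) (ε : ZMod 2), F (t, ε) = ((a * b) * t * (a * b)⁻¹,
        ε + ((if t = b then (1 : ZMod 2) else 0) + (if t = b * a * b then 1 else 0)))) :
    F ^ m = 1 := by
  obtain ⟨p, hp⟩ : ∃ p : G, p = a * b := ⟨a * b, rfl⟩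
  obtain ⟨φ, hφdef⟩ : ∃ φ : G → G, φ = fun t => p * t * p⁻¹ := ⟨_, rfl⟩
  obtain ⟨χ, hχdef⟩ : ∃ χ : G → ZMod 2,
      χ = fun t => (if t = b then (1 : ZMod 2) else 0) + (if t = b * a * b then 1 else 0) :=
    ⟨_, rfl⟩
  have hpm : p ^ m = 1 := by rw [hp]; exact hpm0
  have hF : ∀ (t : G) (ε : ZMod 2), F (t, ε) = (φ t, ε + χ t) := by
    intro t ε
    rw [hF0 t ε, hφdef, hχdef, hp]
  have haL : ∀ w : G, a * (a * w) = w := fun w => by rw [← mul_assoc, ha, one_mul]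
  have hbL : ∀ w : G, b * (b * w) = w := fun w => by rw [← mul_assoc, hb, one_mul]
  have hφ_iter : ∀ (l : ℕ) (t : G), φ^[l] t = p ^ l * t * (p ^ l)⁻¹ := by
    intro l
    induction l with
    | zero => intro t; simp
    | succ l ih =>
      intro t
      rw [Function.iterate_succ_apply, ih (φ t), hφdef]
      simp only
      rw [pow_succ']
      group
  have hap1 : a * p * a = p⁻¹ := by
    rw [hp, mul_inv_rev, inv_eq_of_mul_eq_one_right hb, inv_eq_of_mul_eq_one_right ha,
      ← mul_assoc, ha, one_mul]
  have hbp1 : b * p * b = p⁻¹ := by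
    rw [hp, mul_inv_rev, inv_eq_of_mul_eq_one_right hb, inv_eq_of_mul_eq_one_right ha,
      ← mul_assoc, mul_assoc (b * a) b b, hb, mul_one]
  have hapd : ∀ d : ℕ, a * p ^ d * a = (p ^ d)⁻¹ := by
    intro d
    induction d with
    | zero => simp [ha]
    | succ d ih =>
      have e : a * p ^ (d + 1) * a = (a * p * a) * (a * p ^ d * a) := by
        rw [pow_succ']
        simp only [mul_assoc, haL]
      rw [e, ih, hap1, ← mul_inv_rev, ← pow_succ]
  have hbpd : ∀ d : ℕ, b * p ^ d * b = (p ^ d)⁻¹ := by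
    intro d
    induction d with
    | zero => simp [hb]
    | succ d ih =>
      have e : b * p ^ (d + 1) * b = (b * p * b) * (b * p ^ d * b) := by
        rw [pow_succ']
        simp only [mul_assoc, hbL]
      rw [e, ih, hbp1, ← mul_inv_rev, ← pow_succ]
  have hconjb : ∀ d : ℕ, (p ^ d)⁻¹ * b * p ^ d = b * (p ^ d * p ^ d) := by
    intro d
    rw [← hbpd d]
    simp only [mul_assoc, hbL]
  have hconja : ∀ d : ℕ, (p ^ d)⁻¹ * a * p ^ d = a * (p ^ d * p ^ d) := by
    intro d
    rw [← hapd d]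
    simp only [mul_assoc, haL]
  have hcond : ∀ (l c : ℕ) (t r : G), (φ^[l + c] t = r) ↔ (φ^[l] t = (p ^ c)⁻¹ * r * p ^ c) := by
    intro l c t r
    rw [show l + c = c + l by omega, Function.iterate_add_apply, hφ_iter c (φ^[l] t),
      conj_eq_iff]
  apply Equiv.ext
  rintro ⟨t, ε⟩
  rw [perm_pow_apply F φ χ hF m t ε]
  have hfix : φ^[m] t = t := by rw [hφ_iter, hpm]; group
  have hz2 : ∀ x : ZMod 2, x + x = 0 := by decide
  have hsum : ∑ l ∈ Finset.range m, χ (φ^[l] t) = 0 := by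
    rcases Nat.even_or_odd m with ⟨q, hq⟩ | ⟨q, hq⟩
    · -- even case
      have hb' : (p ^ q)⁻¹ * b * p ^ q = b := by
        rw [hconjb q, ← pow_add, ← hq, hpm, mul_one]
      have ha' : (p ^ q)⁻¹ * a * p ^ q = a := by
        rw [hconja q, ← pow_add, ← hq, hpm, mul_one]
      have hbab' : (p ^ q)⁻¹ * (b * a * b) * p ^ q = b * a * b := by
        rw [conj_mul_dist (p ^ q) (b * a) b, conj_mul_dist (p ^ q) b a, ha', hb']
      have hper : ∀ l, χ (φ^[l + q] t) = χ (φ^[l] t) := by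
        intro l
        have c1 : (φ^[l + q] t = b) ↔ (φ^[l] t = b) := by
          have h' := hcond l q t b
          rwa [hb'] at h'
        have c2 : (φ^[l + q] t = b * a * b) ↔ (φ^[l] t = b * a * b) := by
          have h' := hcond l q t (b * a * b)
          rwa [hbab'] at h'
        rw [hχdef]
        simp only
        rw [if_congr c1 rfl rfl, if_congr c2 rfl rfl]
      rw [show m = q + q from hq]
      exact sum_range_two_mul_eq_zero (fun l => χ (φ^[l] t)) q (fun l => hper l)
    · -- odd case, m = 2 * q + 1
      have hsplit : ∑ l ∈ Finset.range m, χ (φ^[l] t)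
          = (∑ l ∈ Finset.range m, if φ^[l] t = b then (1 : ZMod 2) else 0)
            + (∑ l ∈ Finset.range m, if φ^[l] t = b * a * b then (1 : ZMod 2) else 0) := by
        rw [← Finset.sum_add_distrib]
        exact Finset.sum_congr rfl fun l _ => by rw [hχdef]
      have hbab2 : (p ^ (q + 1))⁻¹ * b * p ^ (q + 1) = b * a * b := by
        rw [hconjb (q + 1), ← pow_add, show (q + 1) + (q + 1) = m + 1 by omega,
          pow_succ, hpm, one_mul, hp, ← mul_assoc]
      have hshift : ∀ l, (if φ^[l] t = b * a * b then (1 : ZMod 2) else 0)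
          = (if φ^[l + (q + 1)] t = b then 1 else 0) := by
        intro l
        have iff1 := hcond l (q + 1) t b
        rw [hbab2] at iff1
        exact if_congr iff1.symm rfl rfl
      have hperm : ∀ l, (fun l => if φ^[l] t = b then (1 : ZMod 2) else 0) (l + m)
          = (fun l => if φ^[l] t = b then (1 : ZMod 2) else 0) l := by
        intro l
        simp only
        have iff2 := hcond l m t b
        rw [hpm, inv_one, one_mul, mul_one] at iff2
        exact if_congr iff2 rfl rfl
      rw [hsplit, Finset.sum_congr rfl (fun l _ => hshift l),
        sum_range_shift (fun l => if φ^[l] t = b then (1 : ZMod 2) else 0) m hperm (q + 1)]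
      exact hz2 _
  rw [hfix, hsum, add_zero]
  rfl

end SkewLemmas

section Lift

variable (cs : CoxeterSystem M W)

theorem sigma_liftable : M.IsLiftable (fun i => sigma cs i) := by
  intro i j
  show (sigma cs i * sigma cs j) ^ M i j = 1
  apply skew_braid_pow (cs.simple i) (cs.simple j) (cs.simple_mul_simple_self i)
    (cs.simple_mul_simple_self j) (M i j) (cs.simple_mul_simple_pow i j)
  intro t ε
  rw [Equiv.Perm.mul_apply, sigma_apply, sigma_apply]
  refine Prod.ext ?_ ?_
  · show cs.simple i * (cs.simple j * t * cs.simple j) * cs.simple i = _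
    rw [mul_inv_rev, cs.inv_simple, cs.inv_simple]
    simp only [mul_assoc]
  · show ε + (if t = cs.simple j then 1 else 0)
        + (if cs.simple j * t * cs.simple j = cs.simple i then 1 else 0) = ε + _
    have e2 : (if cs.simple j * t * cs.simple j = cs.simple i then (1 : ZMod 2) else 0)
        = (if t = cs.simple j * cs.simple i * cs.simple j then 1 else 0) :=
      if_congr (invol_conj_eq_iff (cs.simple_mul_simple_self j) t (cs.simple i)) rfl rfl
    rw [add_assoc, e2]

end Lift

section PhiN

variable (cs : CoxeterSystem M W)

noncomputable def Phi : W →* Equiv.Perm (W × ZMod 2) :=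
  cs.lift ⟨fun i => sigma cs i, sigma_liftable cs⟩

lemma Phi_simple (i : B) : Phi cs (cs.simple i) = sigma cs i :=
  cs.lift_apply_simple (sigma_liftable cs) i

lemma Phi_word (ω : List B) (t : W) (ε : ZMod 2) :
    Phi cs (cs.wordProd ω) (t, ε)
      = (cs.wordProd ω * t * (cs.wordProd ω)⁻¹,
         ε + cnt t (cs.leftInvSeq ω.reverse)) := by
  induction ω with
  | nil =>
    rw [cs.wordProd_nil, map_one]
    show (t, ε) = _
    rw [List.reverse_nil, cs.leftInvSeq_nil, cnt_nil, add_zero]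
    simp
  | cons i ω ih =>
    rw [cs.wordProd_cons, map_mul, Equiv.Perm.mul_apply, ih, Phi_simple, sigma_apply]
    refine Prod.ext ?_ ?_
    · show cs.simple i * (cs.wordProd ω * t * (cs.wordProd ω)⁻¹) * cs.simple i = _
      rw [mul_inv_rev, cs.inv_simple]
      simp only [mul_assoc]
    · show ε + cnt t (cs.leftInvSeq ω.reverse)
          + (if cs.wordProd ω * t * (cs.wordProd ω)⁻¹ = cs.simple i then 1 else 0)
        = ε + cnt t (cs.leftInvSeq (i :: ω).reverse)
      rw [List.reverse_cons, ← List.concat_eq_append, cs.leftInvSeq_concat,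
        List.concat_eq_append, cnt_concat, cs.wordProd_reverse, inv_inv]
      have c1 : ((cs.wordProd ω)⁻¹ * cs.simple i * cs.wordProd ω = t)
          ↔ (cs.wordProd ω * t * (cs.wordProd ω)⁻¹ = cs.simple i) := by
        rw [conj_eq_iff]
        constructor
        · intro h; exact h.symm
        · intro h; exact h.symm
      rw [if_congr c1 rfl rfl, add_assoc]

noncomputable def Nn (w t : W) : ZMod 2 := (Phi cs w⁻¹ (t, 0)).2

lemma Nn_eq_cnt (ω : List B) (t : W) :
    Nn cs (cs.wordProd ω) t = cnt t (cs.leftInvSeq ω) := by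
  unfold Nn
  rw [← cs.wordProd_reverse, Phi_word]
  show 0 + cnt t (cs.leftInvSeq ω.reverse.reverse) = _
  rw [zero_add, List.reverse_reverse]

lemma Phi_apply (g t : W) (ε : ZMod 2) :
    Phi cs g (t, ε) = (g * t * g⁻¹, ε + Nn cs g⁻¹ t) := by
  obtain ⟨ω, _hred, rfl⟩ := cs.exists_reduced_word' g
  rw [Phi_word]
  congr 1
  rw [← cs.wordProd_reverse, Nn_eq_cnt]

lemma Nn_mul (u v t : W) : Nn cs (u * v) t = Nn cs u t + Nn cs v (u⁻¹ * t * u) := by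
  show (Phi cs (u * v)⁻¹ (t, 0)).2 = _
  rw [mul_inv_rev, map_mul, Equiv.Perm.mul_apply, Phi_apply cs u⁻¹ t 0, inv_inv,
    Phi_apply cs v⁻¹ (u⁻¹ * t * u) (0 + Nn cs u t), inv_inv]
  show 0 + Nn cs u t + Nn cs v (u⁻¹ * t * u) = _
  rw [zero_add]

lemma Nn_one (t : W) : Nn cs 1 t = 0 := by
  unfold Nn
  rw [inv_one, map_one]
  rfl

lemma Nn_simple (i : B) (t : W) :
    Nn cs (cs.simple i) t = if t = cs.simple i then 1 else 0 := by
  have h := Nn_eq_cnt cs [i] t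
  rw [cs.wordProd_singleton] at h
  rw [h, cs.leftInvSeq_singleton]
  rw [show cnt t [cs.simple i] = if cs.simple i = t then 1 else 0 by simp [cnt]]
  exact if_congr eq_comm rfl rfl

lemma Nn_refl_self {t : W} (ht : cs.IsReflection t) : Nn cs t t = 1 := by
  obtain ⟨w, i, rfl⟩ := ht
  have e : w * cs.simple i * w⁻¹ = w * (cs.simple i * w⁻¹) := by rw [mul_assoc]
  have e2 : w⁻¹ * (w * (cs.simple i * w⁻¹)) * w = cs.simple i := by group
  have h4 : Nn cs w (w * (cs.simple i * w⁻¹))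
      + Nn cs w⁻¹ (w⁻¹ * (w * (cs.simple i * w⁻¹)) * w) = 0 := by
    rw [← Nn_mul, show w * w⁻¹ = (1 : W) by group, Nn_one]
  rw [e2] at h4
  rw [e, Nn_mul, e2, Nn_mul]
  have e3 : (cs.simple i)⁻¹ * cs.simple i * cs.simple i = cs.simple i := by group
  rw [e3, Nn_simple, if_pos rfl]
  have key : ∀ x y : ZMod 2, x + y = 0 → x + (1 + y) = 1 := by decide
  exact key _ _ h4

lemma Nn_eq_zero_aux :
    ∀ n, ∀ {w t : W}, cs.length w = n → cs.IsReflection t →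
      cs.length w < cs.length (t * w) → Nn cs w t = 0 := by
  intro n
  induction n using Nat.strong_induction_on with
  | _ n IH =>
    intro w t hn ht h
    rcases eq_or_ne w 1 with rfl | hw
    · exact Nn_one cs t
    · obtain ⟨i, hdesc⟩ := cs.exists_leftDescent_of_ne_one hw
      have hdesc' : cs.length (cs.simple i * w) < cs.length w := hdesc
      rcases eq_or_ne t (cs.simple i) with rfl | htne
      · omega
      · have hw' : w = cs.simple i * (cs.simple i * w) := by
          rw [cs.simple_mul_simple_cancel_left]
        rw [hw', Nn_mul, Nn_simple, if_neg htne, zero_add, cs.inv_simple]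
        have ht' : cs.IsReflection (cs.simple i * t * cs.simple i) := by
          have := ht.conj (cs.simple i)
          rwa [cs.inv_simple] at this
        have hlt' : cs.length (cs.simple i * w)
            < cs.length ((cs.simple i * t * cs.simple i) * (cs.simple i * w)) := by
          by_contra hcon
          push_neg at hcon
          have hne := ht'.length_mul_right_ne (cs.simple i * w)
          have hlt2 : cs.length ((cs.simple i * t * cs.simple i) * (cs.simple i * w))
              < cs.length (cs.simple i * w) := by omega
          have e : t * w
              = cs.simple i * ((cs.simple i * t * cs.simple i) * (cs.simple i * w)) := by
            simp only [mul_assoc, cs.simple_mul_simple_cancel_left]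
          have hb := cs.length_simple_mul
            ((cs.simple i * t * cs.simple i) * (cs.simple i * w)) i
          rw [← e] at hb
          omega
        exact IH (cs.length (cs.simple i * w)) (by omega) rfl ht' hlt'

theorem strong_exchange {ω : List B} (hred : cs.IsReduced ω) {t : W}
    (ht : cs.IsReflection t)
    (hl : cs.length (t * cs.wordProd ω) < cs.length (cs.wordProd ω)) :
    ∃ j < ω.length, t * cs.wordProd ω = cs.wordProd (ω.eraseIdx j) := by
  have h1 : Nn cs (cs.wordProd ω) t = 1 := by
    have hvw : cs.wordProd ω = t * (t * cs.wordProd ω) := by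
      rw [← mul_assoc, ht.mul_self, one_mul]
    rw [hvw, Nn_mul, Nn_refl_self cs ht]
    have e : t⁻¹ * t * t = t := by group
    rw [e, Nn_eq_zero_aux cs _ rfl ht (by rw [← hvw]; exact hl), add_zero]
  have h2 : cnt t (cs.leftInvSeq ω) = 1 := by rw [← Nn_eq_cnt]; exact h1
  have h3 : t ∈ cs.leftInvSeq ω := by
    apply mem_of_cnt_ne_zero
    rw [h2]
    decide
  obtain ⟨j, hj, hjt⟩ := List.getElem_of_mem h3
  have hlen := cs.length_leftInvSeq ω
  refine ⟨j, by omega, ?_⟩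
  have e := cs.getD_leftInvSeq_mul_wordProd ω j
  rw [List.getD_eq_getElem _ 1 hj, hjt] at e
  exact e

end PhiN

section Basic

variable (cs : CoxeterSystem M W)

lemma bruhatLe_refl (x : W) : BruhatLe cs x x := Relation.ReflTransGen.refl

lemma BruhatLe.trans' {x y z : W} (h1 : BruhatLe cs x y) (h2 : BruhatLe cs y z) :
    BruhatLe cs x z := Relation.ReflTransGen.trans h1 h2

lemma length_le_of_bruhatLe {u v : W} (h : BruhatLe cs u v) :
    cs.length u ≤ cs.length v := by
  induction h with
  | refl => exact le_refl _
  | tail _ hcov ih => have := hcov.1; omega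

lemma eq_of_bruhatLe_of_length_le {u v : W} (h : BruhatLe cs u v)
    (h2 : cs.length v ≤ cs.length u) : u = v := by
  rcases Relation.ReflTransGen.cases_tail h with rfl | ⟨c, hc, hcov⟩
  · rfl
  · have h3 := length_le_of_bruhatLe cs hc
    have h4 := hcov.1
    omega

/-- If `ℓ(s i * x) > ℓ x` then `x ⋖ s i * x`. -/
lemma cov_simple_up {x : W} {i : B} (h : cs.length x < cs.length (cs.simple i * x)) :
    BruhatCov cs x (cs.simple i * x) := by
  refine ⟨?_, cs.simple i, cs.isReflection_simple i, rfl⟩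
  rcases cs.length_simple_mul x i with h' | h' <;> omega

lemma le_simple_up {x : W} {i : B} (h : cs.length x < cs.length (cs.simple i * x)) :
    BruhatLe cs x (cs.simple i * x) :=
  Relation.ReflTransGen.single (cov_simple_up cs h)

lemma simple_le_down {x : W} {i : B} (h : cs.length (cs.simple i * x) < cs.length x) :
    BruhatLe cs (cs.simple i * x) x := by
  refine Relation.ReflTransGen.single ⟨?_, cs.simple i, cs.isReflection_simple i, ?_⟩
  · rcases cs.length_simple_mul x i with h' | h' <;> omega
  · rw [cs.simple_mul_simple_cancel_left]

lemma bruhatLe_one_iff {u : W} (h : BruhatLe cs u 1) : u = 1 := by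
  apply eq_of_bruhatLe_of_length_le cs h
  simp

end Basic


section Order

variable (cs : CoxeterSystem M W)

/-- C3: a cover `x ⋖ v` with `s i * x > x` and `s i * v < v` forces `s i * x = v`. -/
lemma cov_simple_eq {x v : W} {i : B} (hcov : BruhatCov cs x v)
    (hx : cs.length x < cs.length (cs.simple i * x))
    (hv : cs.length (cs.simple i * v) < cs.length v) :
    cs.simple i * x = v := by
  obtain ⟨hlen, t, ht, rfl⟩ := hcov
  obtain ⟨α, hαred, hα⟩ := cs.exists_reduced_word' (cs.simple i * (t * x))
  have hπ : cs.wordProd (i :: α) = t * x := by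
    rw [cs.wordProd_cons, ← hα, cs.simple_mul_simple_cancel_left]
  have hslen : cs.length (cs.simple i * (t * x)) + 1 = cs.length (t * x) := by
    rcases cs.length_simple_mul (t * x) i with h | h
    · omega
    · exact h
  unfold CoxeterSystem.IsReduced at hαred
  rw [← hα] at hαred
  have hωred : cs.IsReduced (i :: α) := by
    unfold CoxeterSystem.IsReduced
    rw [hπ, List.length_cons]
    omega
  have hx' : x = t * cs.wordProd (i :: α) := by
    rw [hπ, ← mul_assoc, ht.mul_self, one_mul]
  have hlt : cs.length (t * cs.wordProd (i :: α)) < cs.length (cs.wordProd (i :: α)) := by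
    rw [← hx', hπ]
    omega
  obtain ⟨j, hj, hje⟩ := strong_exchange cs hωred ht hlt
  have hje' : x = cs.wordProd ((i :: α).eraseIdx j) := by rw [hx', hje]
  match j, hj with
  | 0, hj =>
    rw [show (i :: α).eraseIdx 0 = α from rfl] at hje'
    have hxe : x = cs.simple i * (t * x) := hje'.trans hα.symm
    calc cs.simple i * x = cs.simple i * (cs.simple i * (t * x)) :=
          congrArg (fun z => cs.simple i * z) hxe
      _ = t * x := cs.simple_mul_simple_cancel_left i
  | (k+1), hj =>
    exfalso
    rw [show (i :: α).eraseIdx (k + 1) = i :: α.eraseIdx k from rfl,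
      cs.wordProd_cons] at hje'
    have h5 : cs.simple i * x = cs.wordProd (α.eraseIdx k) := by
      rw [hje', cs.simple_mul_simple_cancel_left]
    have h6 : cs.length (cs.simple i * x) ≤ (α.eraseIdx k).length := by
      rw [h5]; exact cs.length_wordProd_le _
    have hk : k < α.length := by
      have := (List.length_cons (a := i) (as := α)) ▸ hj
      omega
    have h7 : (α.eraseIdx k).length + 1 = α.length := List.length_eraseIdx_add_one hk
    omega

/-- C1: covers transport along an `s i` that goes up on both. -/
lemma cov_conj_up {x v : W} {i : B} (hcov : BruhatCov cs x v)
    (hx : cs.length x < cs.length (cs.simple i * x))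
    (hv : cs.length v < cs.length (cs.simple i * v)) :
    BruhatCov cs (cs.simple i * x) (cs.simple i * v) := by
  obtain ⟨hlen, t, ht, rfl⟩ := hcov
  have ht' : cs.IsReflection (cs.simple i * t * cs.simple i) := by
    have := ht.conj (cs.simple i)
    rwa [cs.inv_simple] at this
  refine ⟨?_, cs.simple i * t * cs.simple i, ht', ?_⟩
  · have h1 := cs.length_simple_mul x i
    have h2 := cs.length_simple_mul (t * x) i
    omega
  · simp only [mul_assoc, cs.simple_mul_simple_cancel_left]

/-- C4: covers transport along an `s i` that goes down on both. -/
lemma cov_conj_down {x v : W} {i : B} (hcov : BruhatCov cs x v)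
    (hx : cs.length (cs.simple i * x) < cs.length x)
    (hv : cs.length (cs.simple i * v) < cs.length v) :
    BruhatCov cs (cs.simple i * x) (cs.simple i * v) := by
  obtain ⟨hlen, t, ht, rfl⟩ := hcov
  have ht' : cs.IsReflection (cs.simple i * t * cs.simple i) := by
    have := ht.conj (cs.simple i)
    rwa [cs.inv_simple] at this
  refine ⟨?_, cs.simple i * t * cs.simple i, ht', ?_⟩
  · have h1 := cs.length_simple_mul x i
    have h2 := cs.length_simple_mul (t * x) i
    omega
  · simp only [mul_assoc, cs.simple_mul_simple_cancel_left]

/-- The lifting properties (E) and (D), by mutual strong induction on `ℓ v`. -/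
lemma lemED : ∀ n : ℕ, ∀ u v : W, ∀ i : B, BruhatLe cs u v → cs.length v ≤ n →
    (cs.length (cs.simple i * v) < cs.length v → BruhatLe cs (cs.simple i * u) v) ∧
    (cs.length v < cs.length (cs.simple i * v) →
      BruhatLe cs (cs.simple i * u) (cs.simple i * v)) := by
  intro n
  induction n using Nat.strong_induction_on with
  | _ n IH =>
    intro u v i hle hn
    constructor
    · intro hv
      rcases cs.length_simple_mul u i with hu | hu
      · rcases Relation.ReflTransGen.cases_tail hle with rfl | ⟨x, hux, hxv⟩
        · omega
        · have hxlen : cs.length v = cs.length x + 1 := hxv.1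
          rcases cs.length_simple_mul x i with hxup | hxdown
          · have hD := (IH (cs.length x) (by omega) u x i hux (le_refl _)).2 (by omega)
            have hC3 : cs.simple i * x = v := cov_simple_eq cs hxv (by omega) hv
            rw [hC3] at hD
            exact hD
          · have hE := (IH (cs.length x) (by omega) u x i hux (le_refl _)).1 (by omega)
            exact hE.trans (Relation.ReflTransGen.single hxv)
      · exact (simple_le_down cs (by omega)).trans hle
    · intro hv
      rcases cs.length_simple_mul u i with hu | hu
      · rcases Relation.ReflTransGen.cases_tail hle with rfl | ⟨x, hux, hxv⟩
        · exact Relation.ReflTransGen.refl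
        · have hxlen : cs.length v = cs.length x + 1 := hxv.1
          rcases cs.length_simple_mul x i with hxup | hxdown
          · have hD := (IH (cs.length x) (by omega) u x i hux (le_refl _)).2 (by omega)
            exact hD.trans
              (Relation.ReflTransGen.single (cov_conj_up cs hxv (by omega) (by omega)))
          · have hE := (IH (cs.length x) (by omega) u x i hux (le_refl _)).1 (by omega)
            exact ((hE.trans (Relation.ReflTransGen.single hxv)).trans
              (le_simple_up cs (by omega)))
      · exact ((simple_le_down cs (by omega)).trans hle).trans (le_simple_up cs (by omega))

lemma lemE {u v : W} {i : B} (hle : BruhatLe cs u v)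
    (hv : cs.length (cs.simple i * v) < cs.length v) :
    BruhatLe cs (cs.simple i * u) v :=
  (lemED cs (cs.length v) u v i hle (le_refl _)).1 hv

lemma lemD {u v : W} {i : B} (hle : BruhatLe cs u v)
    (hv : cs.length v < cs.length (cs.simple i * v)) :
    BruhatLe cs (cs.simple i * u) (cs.simple i * v) :=
  (lemED cs (cs.length v) u v i hle (le_refl _)).2 hv

/-- (B): `u ≤ v`, `s i` descent of both ⇒ `s i * u ≤ s i * v`. -/
lemma lemB : ∀ n : ℕ, ∀ u v : W, ∀ i : B, BruhatLe cs u v → cs.length v ≤ n →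
    cs.length (cs.simple i * v) < cs.length v →
    cs.length (cs.simple i * u) < cs.length u →
    BruhatLe cs (cs.simple i * u) (cs.simple i * v) := by
  intro n
  induction n using Nat.strong_induction_on with
  | _ n IH =>
    intro u v i hle hn hv hu
    rcases Relation.ReflTransGen.cases_tail hle with rfl | ⟨x, hux, hxv⟩
    · exact Relation.ReflTransGen.refl
    · have hxlen : cs.length v = cs.length x + 1 := hxv.1
      rcases cs.length_simple_mul x i with hxup | hxdown
      · have hC3 : cs.simple i * x = v := cov_simple_eq cs hxv (by omega) hv
        have hsv : cs.simple i * v = x := by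
          rw [← hC3, cs.simple_mul_simple_cancel_left]
        rw [hsv]
        exact (simple_le_down cs hu).trans hux
      · have hIH := IH (cs.length x) (by omega) u x i hux (le_refl _) (by omega) hu
        exact hIH.trans
          (Relation.ReflTransGen.single (cov_conj_down cs hxv (by omega) (by omega)))

/-- (C): `u ≤ v`, `s i` descent of `v`, ascent of `u` ⇒ `u ≤ s i * v`. -/
lemma lemC : ∀ n : ℕ, ∀ u v : W, ∀ i : B, BruhatLe cs u v → cs.length v ≤ n →
    cs.length (cs.simple i * v) < cs.length v →
    cs.length u < cs.length (cs.simple i * u) →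
    BruhatLe cs u (cs.simple i * v) := by
  intro n
  induction n using Nat.strong_induction_on with
  | _ n IH =>
    intro u v i hle hn hv hu
    rcases Relation.ReflTransGen.cases_tail hle with rfl | ⟨x, hux, hxv⟩
    · omega
    · have hxlen : cs.length v = cs.length x + 1 := hxv.1
      rcases cs.length_simple_mul x i with hxup | hxdown
      · have hC3 : cs.simple i * x = v := cov_simple_eq cs hxv (by omega) hv
        have hsv : cs.simple i * v = x := by
          rw [← hC3, cs.simple_mul_simple_cancel_left]
        rw [hsv]
        exact hux
      · have hIH := IH (cs.length x) (by omega) u x i hux (le_refl _) (by omega) hu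
        exact hIH.trans
          (Relation.ReflTransGen.single (cov_conj_down cs hxv (by omega) (by omega)))

end Order

section PhiPsi

variable (cs : CoxeterSystem M W)

lemma bruhatLt_iff_up {y : W} {i : B} :
    BruhatLt cs y (cs.simple i * y) ↔ cs.length y < cs.length (cs.simple i * y) := by
  constructor
  · rintro ⟨hle, hne⟩
    have h1 := length_le_of_bruhatLe cs hle
    have h2 := cs.length_simple_mul_ne y i
    omega
  · intro h
    refine ⟨le_simple_up cs h, fun he => ?_⟩
    rw [← he] at h
    omega

lemma bruhatLt_iff_down {x : W} {i : B} :
    BruhatLt cs (cs.simple i * x) x ↔ cs.length (cs.simple i * x) < cs.length x := by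
  constructor
  · rintro ⟨hle, hne⟩
    have h1 := length_le_of_bruhatLe cs hle
    have h2 := cs.length_simple_mul_ne x i
    omega
  · intro h
    refine ⟨simple_le_down cs h, fun he => ?_⟩
    rw [he] at h
    omega

lemma phi_up {i : B} {y : W} (h : cs.length y < cs.length (cs.simple i * y)) :
    phi cs i y = cs.simple i * y := if_pos ((bruhatLt_iff_up cs).mpr h)

lemma phi_down {i : B} {y : W} (h : cs.length (cs.simple i * y) < cs.length y) :
    phi cs i y = y :=
  if_neg (fun hc => by have := (bruhatLt_iff_up cs).mp hc; omega)

lemma psi_up {i : B} {x : W} (h : cs.length x < cs.length (cs.simple i * x)) :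
    psi cs i x = x :=
  if_neg (fun hc => by have := (bruhatLt_iff_down cs).mp hc; omega)

lemma psi_down {i : B} {x : W} (h : cs.length (cs.simple i * x) < cs.length x) :
    psi cs i x = cs.simple i * x := if_pos ((bruhatLt_iff_down cs).mpr h)

/-- Single-letter adjunction: `x ≤ φ_i(y) ↔ ψ_i(x) ≤ y`. -/
lemma adj_single (i : B) (x y : W) :
    BruhatLe cs x (phi cs i y) ↔ BruhatLe cs (psi cs i x) y := by
  have hcanx : cs.simple i * (cs.simple i * x) = x := cs.simple_mul_simple_cancel_left i
  have hcany : cs.simple i * (cs.simple i * y) = y := cs.simple_mul_simple_cancel_left i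
  rcases cs.length_simple_mul y i with hy | hy
  · rcases cs.length_simple_mul x i with hx | hx
    · -- both ascents : x ≤ s i * y ↔ x ≤ y
      rw [phi_up cs (by omega), psi_up cs (by omega)]
      constructor
      · intro h
        have := lemC cs (cs.length (cs.simple i * y)) x (cs.simple i * y) i h (le_refl _)
          (by rw [hcany]; omega) (by omega)
        rwa [hcany] at this
      · intro h
        exact h.trans (le_simple_up cs (by omega))
    · -- y ascent, x descent : x ≤ s i * y ↔ s i * x ≤ y
      rw [phi_up cs (by omega), psi_down cs (by omega)]
      constructor
      · intro h
        have := lemB cs (cs.length (cs.simple i * y)) x (cs.simple i * y) i h (le_refl _)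
          (by rw [hcany]; omega) (by omega)
        rwa [hcany] at this
      · intro h
        have := lemD cs h (i := i) (by omega)
        rwa [hcanx] at this
  · rcases cs.length_simple_mul x i with hx | hx
    · rw [phi_down cs (by omega), psi_up cs (by omega)]
    · rw [phi_down cs (by omega), psi_down cs (by omega)]
      constructor
      · intro h
        exact lemE cs h (by omega)
      · intro h
        have := lemE cs h (i := i) (by omega)
        rwa [hcanx] at this

end PhiPsi

section Demazure

variable (cs : CoxeterSystem M W)

lemma le_phi_of_le {i : B} {a z : W} (h : BruhatLe cs a z) :
    BruhatLe cs a (phi cs i z) ∧ BruhatLe cs (cs.simple i * a) (phi cs i z) := by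
  rcases cs.length_simple_mul z i with hz | hz
  · rw [phi_up cs (by omega)]
    exact ⟨h.trans (le_simple_up cs (by omega)), lemD cs h (by omega)⟩
  · rw [phi_down cs (by omega)]
    exact ⟨h, lemE cs h (by omega)⟩

lemma isReduced_cons {i : B} {ω : List B} (h : cs.IsReduced (i :: ω)) :
    cs.IsReduced ω ∧ cs.length (cs.wordProd ω) < cs.length (cs.simple i * cs.wordProd ω) := by
  have h1 : cs.IsReduced ω := by
    have := h.drop 1
    simpa using this
  refine ⟨h1, ?_⟩
  unfold CoxeterSystem.IsReduced at h h1
  rw [cs.wordProd_cons] at h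
  rw [List.length_cons] at h
  rcases cs.length_simple_mul (cs.wordProd ω) i with h2 | h2 <;> omega

lemma phiWord_cons (i : B) (ω : List B) (y : W) :
    phiWord cs (i :: ω) y = phi cs i (phiWord cs ω y) := rfl

/-- `φ_ω(y)` belongs to the set `{u' y' : u' ≤ π ω, y' ≤ y}`. -/
lemma phiWord_mem {ω : List B} (hred : cs.IsReduced ω) (y : W) :
    ∃ u' y', BruhatLe cs u' (cs.wordProd ω) ∧ BruhatLe cs y' y
      ∧ phiWord cs ω y = u' * y' := by
  induction ω with
  | nil =>
    refine ⟨1, y, ?_, bruhatLe_refl cs y, (one_mul y).symm⟩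
    rw [cs.wordProd_nil]
    exact bruhatLe_refl cs 1
  | cons i ω ih =>
    obtain ⟨h1, h2⟩ := isReduced_cons cs hred
    obtain ⟨u', y', hu, hy, heq⟩ := ih h1
    rw [phiWord_cons, cs.wordProd_cons]
    rcases cs.length_simple_mul (phiWord cs ω y) i with hz | hz
    · refine ⟨cs.simple i * u', y', lemD cs hu (by omega), hy, ?_⟩
      rw [phi_up cs (by omega), heq, mul_assoc]
    · refine ⟨u', y', hu.trans (le_simple_up cs (by omega)), hy, ?_⟩
      rw [phi_down cs (by omega), heq]

/-- `φ_ω(y)` dominates the set `{u' y' : u' ≤ π ω, y' ≤ y}`. -/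
lemma le_phiWord {ω : List B} (hred : cs.IsReduced ω) {y : W} :
    ∀ u' y', BruhatLe cs u' (cs.wordProd ω) → BruhatLe cs y' y →
      BruhatLe cs (u' * y') (phiWord cs ω y) := by
  induction ω with
  | nil =>
    intro u' y' hu hy
    rw [cs.wordProd_nil] at hu
    rw [bruhatLe_one_iff cs hu, one_mul]
    exact hy
  | cons i ω ih =>
    obtain ⟨h1, h2⟩ := isReduced_cons cs hred
    intro u' y' hu hy
    rw [cs.wordProd_cons] at hu
    have hcanw : cs.simple i * (cs.simple i * cs.wordProd ω) = cs.wordProd ω :=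
      cs.simple_mul_simple_cancel_left i
    rw [phiWord_cons]
    rcases cs.length_simple_mul u' i with hup | hdown
    · -- ℓ (s i * u') = ℓ u' + 1 : use lemC to get u' ≤ π ω
      have hu2 : BruhatLe cs u' (cs.wordProd ω) := by
        have := lemC cs (cs.length (cs.simple i * cs.wordProd ω)) u'
          (cs.simple i * cs.wordProd ω) i hu (le_refl _) (by rw [hcanw]; omega) (by omega)
        rwa [hcanw] at this
      exact (le_phi_of_le cs (i := i) (ih h1 u' y' hu2 hy)).1
    · -- ℓ (s i * u') < ℓ u' : use lemB to get s i * u' ≤ π ω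
      have hu2 : BruhatLe cs (cs.simple i * u') (cs.wordProd ω) := by
        have := lemB cs (cs.length (cs.simple i * cs.wordProd ω)) u'
          (cs.simple i * cs.wordProd ω) i hu (le_refl _) (by rw [hcanw]; omega) (by omega)
        rwa [hcanw] at this
      have hle := (le_phi_of_le cs (i := i) (ih h1 (cs.simple i * u') y' hu2 hy)).2
      rwa [← mul_assoc, cs.simple_mul_simple_cancel_left] at hle

/-- Independence of `φ` of the choice of reduced word. -/
lemma phiWord_indep {ω₁ ω₂ : List B} (h1 : cs.IsReduced ω₁) (h2 : cs.IsReduced ω₂)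
    (hπ : cs.wordProd ω₁ = cs.wordProd ω₂) (y : W) :
    phiWord cs ω₁ y = phiWord cs ω₂ y := by
  obtain ⟨u₁, y₁, hu₁, hy₁, he₁⟩ := phiWord_mem cs h1 y
  obtain ⟨u₂, y₂, hu₂, hy₂, he₂⟩ := phiWord_mem cs h2 y
  have hA : BruhatLe cs (phiWord cs ω₁ y) (phiWord cs ω₂ y) := by
    rw [he₁]
    exact le_phiWord cs h2 u₁ y₁ (hπ ▸ hu₁) hy₁
  have hB : BruhatLe cs (phiWord cs ω₂ y) (phiWord cs ω₁ y) := by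
    rw [he₂]
    exact le_phiWord cs h1 u₂ y₂ (hπ ▸ hu₂) hy₂
  exact eq_of_bruhatLe_of_length_le cs hA (length_le_of_bruhatLe cs hB)

/-- Word form of the adjunction, for arbitrary words. -/
lemma adj_word (ω : List B) : ∀ x y : W,
    BruhatLe cs x (phiWord cs ω y)
      ↔ BruhatLe cs (List.foldl (fun a i => psi cs i a) x ω) y := by
  induction ω with
  | nil => intro x y; exact Iff.rfl
  | cons i ω ih =>
    intro x y
    rw [phiWord_cons, adj_single cs i x (phiWord cs ω y), List.foldl_cons]
    exact ih (psi cs i x) y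

end Demazure
/-- `x ≤ φ_u(y)` iff `ψ_{u⁻¹}(x) ≤ y`, with `φ_u` and `ψ_{u⁻¹}` computed along
any reduced words `ω` for `u` and `ω'` for `u⁻¹`. -/
theorem stmt18 (cs : CoxeterSystem M W) (x y u : W) (ω ω' : List B)
    (hred : cs.IsReduced ω) (hω : cs.wordProd ω = u)
    (hred' : cs.IsReduced ω') (hω' : cs.wordProd ω' = u⁻¹) :
    BruhatLe cs x (phiWord cs ω y) ↔ BruhatLe cs (psiWord cs ω' x) y := by
  have hrev_red : cs.IsReduced ω'.reverse := (cs.isReduced_reverse_iff ω').mpr hred'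
  have hrev_prod : cs.wordProd ω'.reverse = u := by
    rw [cs.wordProd_reverse, hω', inv_inv]
  have heq : phiWord cs ω y = phiWord cs ω'.reverse y :=
    phiWord_indep cs hred hrev_red (by rw [hω, hrev_prod]) y
  rw [heq, adj_word cs ω'.reverse x y]
  have hfold : List.foldl (fun a i => psi cs i a) x ω'.reverse = psiWord cs ω' x := by
    rw [List.foldl_reverse]
    rfl
  rw [hfold]
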